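/- Suppose û : ℝ → ℂ is supported in [−ξ₀/2, ξ₀/2] and square-integrable, with Fourier series û(ξ) = ∑_{n∈ℤ} c_n e^{i2πnξ/ξ₀}, where c_{−n} = (1/ξ₀)∫ û(ξ)e^{i2πξn/ξ₀}dξ. If the support of û is contained in a compact interval strictly inside [−0.8·ξ₀/(2π), 0.8·ξ₀/(2π)] and û is not identically zero, then it is impossible that all coefficients satisfy c_n = (1/ξ₀)(m_n·Δ + γ) with m_n ∈ ℤ for fixed Δ > 0, γ ∈ ℝ. -/

import Mathlib

open Real MeasureTheory Set Filter

set_option maxHeartbeats 1000000 in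
theorem no_quantized_fourier_coefficients (ξ₀ : ℝ) (hξ₀ : 0 < ξ₀)
    (u : ℝ → ℂ) (hu : MemLp u 2 (volume : Measure ℝ))
    (σ : ℝ) (hσ : σ < 0.8 * ξ₀)
    (hsupp : Function.support u ⊆ Set.Icc (-(σ / (2 * π))) (σ / (2 * π)))
    (hne : ¬ (∀ᵐ ξ : ℝ ∂volume, u ξ = 0))
    (c : ℤ → ℂ)
    (hc : ∀ n : ℤ,
      c (-n) = (1 / (ξ₀ : ℂ)) *
        ∫ ξ in Set.Icc (-(ξ₀ / 2)) (ξ₀ / 2),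
          u ξ * Complex.exp (Complex.I * 2 * π * ξ * n / ξ₀))
    (Δ : ℝ) (hΔ : 0 < Δ) (γ : ℝ) :
    ¬ (∀ n : ℤ, ∃ m : ℤ, c n = (((m : ℝ) * Δ + γ) / ξ₀ : ℝ)) := by
  classical
  intro hquant
  haveI hfT : Fact (0 < ξ₀) := ⟨hξ₀⟩
  choose m hm using hquant
  have hπ : (3:ℝ) < π := Real.pi_gt_three
  set a : ℝ := -(ξ₀ / 2) with ha
  have haT : a + ξ₀ = ξ₀ / 2 := by rw [ha]; ring
  have hσ2 : σ / (2 * π) < ξ₀ / 2 := by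
    rcases le_or_gt σ 0 with h | h
    · have h1 : σ / (2 * π) ≤ 0 := div_nonpos_of_nonpos_of_nonneg h (by positivity)
      linarith
    · rw [div_lt_iff₀ (by positivity)]
      nlinarith
  -- measurable representative
  set v : ℝ → ℂ := hu.1.mk u with hvdef
  have hvmeas : StronglyMeasurable v := hu.1.stronglyMeasurable_mk
  have huv : u =ᵐ[volume] v := hu.1.ae_eq_mk
  have hv2 : MemLp v 2 (volume : Measure ℝ) := hu.ae_eq huv
  set g : AddCircle ξ₀ → ℂ := AddCircle.liftIoc ξ₀ a v with hgdef
  have hgcoe : ∀ x ∈ Set.Ioc a (a + ξ₀), g x = v x := fun x hx =>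
    AddCircle.liftIoc_coe_apply hx
  have hgm : Measurable g := by
    have h1 : Measurable (AddCircle.equivIoc ξ₀ a) :=
      (AddCircle.measurableEquivIoc ξ₀ a).measurable
    exact hvmeas.measurable.comp (measurable_subtype_coe.comp h1)
  -- Step A : the Fourier coefficients of g are c
  have key : ∀ n : ℤ, fourierCoeff g n = c n := by
    intro n
    have h1 := hc (-n)
    rw [neg_neg] at h1
    rw [fourierCoeff_eq_intervalIntegral g n a, intervalIntegral.integral_of_le (by linarith)]
    have hint : (∫ x in Set.Ioc a (a + ξ₀), fourier (-n) (x : AddCircle ξ₀) • g x)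
        = ∫ ξ in Set.Icc (-(ξ₀ / 2)) (ξ₀ / 2),
            u ξ * Complex.exp (Complex.I * 2 * π * ξ * ((-n : ℤ) : ℂ) / ξ₀) := by
      rw [MeasureTheory.integral_Icc_eq_integral_Ioc]
      have hIoc : Set.Ioc (-(ξ₀ / 2)) (ξ₀ / 2) = Set.Ioc a (a + ξ₀) := by
        rw [ha]; congr 1; ring
      rw [hIoc]
      refine integral_congr_ae ?_
      filter_upwards [ae_restrict_mem measurableSet_Ioc, ae_restrict_of_ae huv]
        with x hx hux
      rw [hgcoe x hx, fourier_coe_apply, ← hux, smul_eq_mul, mul_comm]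
      congr 1
      push_cast
      ring
    rw [hint, h1]
    push_cast
    rw [Complex.real_smul]
    push_cast
    ring
  -- Step B : g is L²
  have hgL2 : MemLp g 2 (volume : Measure (AddCircle ξ₀)) := by
    rw [← (AddCircle.measurePreserving_mk ξ₀ a).map_eq]
    refine (memLp_map_measure_iff hgm.stronglyMeasurable.aestronglyMeasurable
      (AddCircle.measurePreserving_mk ξ₀ a).measurable.aemeasurable).mpr ?_
    have heq : (g ∘ (QuotientAddGroup.mk : ℝ → AddCircle ξ₀))
        =ᵐ[volume.restrict (Set.Ioc a (a + ξ₀))] v := by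
      filter_upwards [ae_restrict_mem measurableSet_Ioc] with x hx
      exact hgcoe x hx
    exact (hv2.restrict _).ae_eq heq.symm
  have hgHaar : MemLp g 2 (AddCircle.haarAddCircle : Measure (AddCircle ξ₀)) := by
    have h1 : (AddCircle.haarAddCircle : Measure (AddCircle ξ₀))
        = (ENNReal.ofReal ξ₀)⁻¹ • (volume : Measure (AddCircle ξ₀)) := by
      rw [AddCircle.volume_eq_smul_haarAddCircle, smul_smul,
        ENNReal.inv_mul_cancel (by simpa using hξ₀) ENNReal.ofReal_ne_top, one_smul]
    rw [h1]
    exact hgL2.smul_measure (ENNReal.inv_ne_top.mpr (by simpa using hξ₀))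
  set G : Lp ℂ 2 (AddCircle.haarAddCircle : Measure (AddCircle ξ₀)) := hgHaar.toLp g with hGdef
  have hGcoeff : ∀ n : ℤ, fourierCoeff (G : AddCircle ξ₀ → ℂ) n = c n := by
    intro n
    rw [← key n]
    refine integral_congr_ae ?_
    filter_upwards [hgHaar.coeFn_toLp] with x hx
    rw [hx]
  have hrepr : ∀ n : ℤ, fourierBasis.repr G n = c n := fun n => by
    rw [fourierBasis_repr, hGcoeff n]
  -- Step C : coefficients tend to zero
  have hc2 : Summable (fun n : ℤ => ‖c n‖ ^ (2 : ℝ)) := by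
    have hmem := lp.memℓp (fourierBasis.repr G)
    rw [memℓp_gen_iff (by norm_num : (0:ℝ) < (2 : ENNReal).toReal)] at hmem
    have heq : (fun n : ℤ => ‖(fourierBasis.repr G) n‖ ^ (2 : ENNReal).toReal)
        = fun n : ℤ => ‖c n‖ ^ (2 : ℝ) := by
      funext n; rw [hrepr n]; norm_num
    rwa [heq] at hmem
  have hc0 : Tendsto c cofinite (nhds 0) := by
    have h1 : Tendsto (fun n : ℤ => ‖c n‖ ^ (2:ℝ)) cofinite (nhds 0) :=
      hc2.tendsto_cofinite_zero
    have h2 : Tendsto (fun n : ℤ => ‖c n‖) cofinite (nhds 0) := by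
      have h3 := (Real.continuous_sqrt.tendsto 0).comp h1
      simp only [Function.comp_def, Real.sqrt_zero] at h3
      have h4 : (fun n : ℤ => Real.sqrt (‖c n‖ ^ (2:ℝ))) = fun n : ℤ => ‖c n‖ := by
        funext n
        rw [show (2:ℝ) = ((2:ℕ):ℝ) by norm_num, Real.rpow_natCast,
          Real.sqrt_sq (norm_nonneg _)]
      rwa [h4] at h3
    exact tendsto_zero_iff_norm_tendsto_zero.mpr h2
  -- Step D : all but finitely many coefficients vanish
  have hnorm : ∀ n : ℤ, ‖c n‖ = |(m n : ℝ) * Δ + γ| / ξ₀ := by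
    intro n
    rw [hm n, Complex.norm_real, Real.norm_eq_abs, abs_div, abs_of_pos hξ₀]
  have hsmall : ∀ᶠ n in (cofinite : Filter ℤ), ‖c n‖ < Δ / (2 * ξ₀) := by
    have h := Metric.tendsto_nhds.mp hc0 (Δ / (2 * ξ₀)) (by positivity)
    simpa [dist_zero_right] using h
  set A : Set ℤ := {n : ℤ | ¬ ‖c n‖ < Δ / (2 * ξ₀)} with hA
  have hfin : A.Finite := Filter.eventually_cofinite.mp hsmall
  have hbound : ∀ n ∉ A, |(m n : ℝ) * Δ + γ| < Δ / 2 := by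
    intro n hn
    have h1 : ‖c n‖ < Δ / (2 * ξ₀) := not_not.mp hn
    rw [hnorm n, div_lt_div_iff₀ hξ₀ (by positivity)] at h1
    rw [lt_div_iff₀ (by norm_num : (0:ℝ) < 2)]
    nlinarith
  have heqm : ∀ n ∉ A, ∀ k, k ∉ A → m n = m k := by
    intro n hn k hk
    have h1 := abs_lt.mp (hbound n hn)
    have h2 := abs_lt.mp (hbound k hk)
    have h4 : |(m n : ℝ) - m k| < 1 := by
      rw [abs_lt]
      constructor <;> nlinarith [h1.1, h1.2, h2.1, h2.2, sq_nonneg Δ]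
    have h5 : |m n - m k| < 1 := by
      have h6 : |((m n - m k : ℤ) : ℝ)| < 1 := by push_cast; exact h4
      exact_mod_cast h6
    have := Int.abs_lt_one_iff.mp h5
    omega
  have hAc : Aᶜ.Infinite := hfin.infinite_compl
  obtain ⟨n₀, hn₀⟩ := hAc.nonempty
  have hconst : ∀ n ∉ A, c n = c n₀ := by
    intro n hn
    rw [hm n, hm n₀, heqm n hn n₀ hn₀]
  have hn₀0 : c n₀ = 0 := by
    have hev : c =ᶠ[cofinite] (fun _ => c n₀) :=
      Filter.eventuallyEq_iff_exists_mem.mpr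
        ⟨Aᶜ, hfin.compl_mem_cofinite, fun n hn => hconst n hn⟩
    have hlim : Tendsto (fun _ : ℤ => c n₀) cofinite (nhds 0) :=
      Filter.Tendsto.congr' hev hc0
    exact tendsto_const_nhds_iff.mp hlim
  have hval0 : ∀ n ∉ A, c n = 0 := fun n hn => (hconst n hn).trans hn₀0
  -- Step E : g agrees a.e. with a trigonometric polynomial
  set S : Finset ℤ := hfin.toFinset with hS
  set PC : C(AddCircle ξ₀, ℂ) := ∑ n ∈ S, c n • fourier n with hPC
  have hPLsum : (ContinuousMap.toLp 2 AddCircle.haarAddCircle ℂ PC : Lp ℂ 2 _)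
      = ∑ n ∈ S, c n • fourierLp 2 n := by
    rw [hPC, map_sum]
    refine Finset.sum_congr rfl fun n _ => ?_
    rw [_root_.map_smul]
  have hPLrepr : ∀ k : ℤ, fourierBasis.repr
      (ContinuousMap.toLp 2 AddCircle.haarAddCircle ℂ PC) k = c k := by
    intro k
    have h1 : fourierBasis.repr (ContinuousMap.toLp 2 AddCircle.haarAddCircle ℂ PC)
        = ∑ n ∈ S, c n • lp.single 2 n (1:ℂ) := by
      rw [hPLsum, map_sum]
      refine Finset.sum_congr rfl fun n _ => ?_
      rw [_root_.map_smul]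
      congr 1
      rw [← coe_fourierBasis]
      exact fourierBasis.repr_self n
    rw [h1]
    have h2 : (((∑ n ∈ S, c n • lp.single 2 n (1:ℂ)) : lp (fun _ : ℤ => ℂ) 2) : ℤ → ℂ) k
        = ∑ n ∈ S, c n • ((lp.single 2 n (1:ℂ) : lp (fun _ : ℤ => ℂ) 2) : ℤ → ℂ) k := by
      simp only [lp.coeFn_sum, Finset.sum_apply, lp.coeFn_smul, Pi.smul_apply]
    rw [h2]
    have h3 : ∀ n : ℤ, ((lp.single 2 n (1:ℂ) : lp (fun _ : ℤ => ℂ) 2) : ℤ → ℂ) k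
        = if k = n then 1 else 0 := by
      intro n
      rw [lp.single_apply]
      split_ifs with h
      · subst h; simp
      · exact Pi.single_eq_of_ne h _
    simp only [h3, smul_eq_mul, mul_ite, mul_one, mul_zero]
    rw [Finset.sum_ite_eq S k (fun n => c n)]
    split_ifs with hk
    · rfl
    · have hkA : k ∉ A := by
        intro hkA
        exact hk (hfin.mem_toFinset.mpr hkA)
      exact (hval0 k hkA).symm
  have hGP : G = ContinuousMap.toLp 2 AddCircle.haarAddCircle ℂ PC := by
    apply fourierBasis.repr.injective
    apply lp.ext
    funext k
    rw [hrepr k, hPLrepr k]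
  have hae : g =ᵐ[(AddCircle.haarAddCircle : Measure (AddCircle ξ₀))] ⇑PC := by
    have h1 := hgHaar.coeFn_toLp
    have h2 := ContinuousMap.coeFn_toLp (p := 2) (AddCircle.haarAddCircle) (𝕜 := ℂ) PC
    rw [← hGP] at h2
    exact h1.symm.trans h2
  -- Step F : transfer back to the real line
  have haevol : g =ᵐ[(volume : Measure (AddCircle ξ₀))] ⇑PC := by
    rw [AddCircle.volume_eq_smul_haarAddCircle]
    exact Measure.ae_smul_measure hae _
  have hcomp : (g ∘ (QuotientAddGroup.mk : ℝ → AddCircle ξ₀))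
      =ᵐ[volume.restrict (Set.Ioc a (a + ξ₀))]
      (⇑PC ∘ (QuotientAddGroup.mk : ℝ → AddCircle ξ₀)) := by
    refine MeasureTheory.ae_eq_comp
      ((AddCircle.measurePreserving_mk ξ₀ a).measurable.aemeasurable) ?_
    rw [(AddCircle.measurePreserving_mk ξ₀ a).map_eq]
    exact haevol
  have huP : u =ᵐ[volume.restrict (Set.Ioc a (a + ξ₀))]
      (fun x : ℝ => PC ((x : ℝ) : AddCircle ξ₀)) := by
    have h1 : u =ᵐ[volume.restrict (Set.Ioc a (a + ξ₀))] v := ae_restrict_of_ae huv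
    have h2 : v =ᵐ[volume.restrict (Set.Ioc a (a + ξ₀))]
        (g ∘ (QuotientAddGroup.mk : ℝ → AddCircle ξ₀)) := by
      filter_upwards [ae_restrict_mem measurableSet_Ioc] with x hx
      exact (hgcoe x hx).symm
    exact (h1.trans h2).trans hcomp
  -- Step G : the polynomial vanishes on an open interval
  set t : ℝ := max (σ / (2 * π)) 0 with ht
  have ht2 : t < ξ₀ / 2 := max_lt hσ2 (by linarith)
  set J : Set ℝ := Set.Ioo t (ξ₀ / 2) with hJ
  have hJsub : J ⊆ Set.Ioc a (a + ξ₀) := by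
    intro x hx
    constructor
    · have h0 : (0:ℝ) ≤ t := le_max_right _ _
      have := hx.1
      rw [ha]; linarith
    · rw [haT]; exact le_of_lt hx.2
  have huJ : ∀ x ∈ J, u x = 0 := by
    intro x hx
    by_contra h0
    have hxI := hsupp (Function.mem_support.mpr h0)
    have h1 : x ≤ σ / (2 * π) := hxI.2
    have h2 : σ / (2 * π) ≤ t := le_max_left _ _
    have := hx.1
    linarith
  have hPJ0 : ∀ᵐ x ∂volume.restrict J, PC ((x : ℝ) : AddCircle ξ₀) = 0 := by
    have h1 := ae_restrict_of_ae_restrict_of_subset hJsub huP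
    filter_upwards [h1, ae_restrict_mem measurableSet_Ioo] with x hx hxJ
    rw [← hx]
    exact huJ x hxJ
  have hPrcont : Continuous (fun x : ℝ => PC ((x : ℝ) : AddCircle ξ₀)) :=
    PC.continuous.comp (AddCircle.continuous_mk' ξ₀)
  have hPrJ : ∀ x ∈ J, PC ((x : ℝ) : AddCircle ξ₀) = 0 := by
    intro x hx
    by_contra hne0
    set V : Set ℝ := {y : ℝ | PC ((y : ℝ) : AddCircle ξ₀) ≠ 0} ∩ J with hV
    have hmeasset : MeasurableSet {y : ℝ | PC ((y : ℝ) : AddCircle ξ₀) ≠ 0} :=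
      ((isOpen_compl_singleton : IsOpen ({(0:ℂ)}ᶜ)).preimage hPrcont).measurableSet
    have hVopen : IsOpen V :=
      ((isOpen_compl_singleton : IsOpen ({(0:ℂ)}ᶜ)).preimage hPrcont).inter isOpen_Ioo
    have hVne : V.Nonempty := ⟨x, hne0, hx⟩
    have hpos := hVopen.measure_pos volume hVne
    have hnull : volume V = 0 := by
      have h0 : volume.restrict J {y : ℝ | ¬ PC ((y : ℝ) : AddCircle ξ₀) = 0} = 0 :=
        ae_iff.mp hPJ0
      rw [Measure.restrict_apply hmeasset] at h0
      exact h0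
    rw [hnull] at hpos
    exact lt_irrefl 0 hpos
  -- Step H : analyticity forces the polynomial to vanish identically
  set Q : ℂ → ℂ := fun z => ∑ n ∈ S, c n * Complex.exp (2 * ↑π * Complex.I * (n:ℂ) * z / (ξ₀:ℂ))
    with hQ
  have hQPr : ∀ x : ℝ, PC ((x : ℝ) : AddCircle ξ₀) = Q (x : ℂ) := by
    intro x
    rw [hPC, hQ]
    rw [ContinuousMap.sum_apply]
    congr 1
    funext n
    rw [ContinuousMap.smul_apply, fourier_coe_apply, smul_eq_mul]
  have hQdiff : Differentiable ℂ Q := by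
    rw [hQ]
    apply Differentiable.fun_sum
    intro n _
    have hlin : Differentiable ℂ (fun z : ℂ => 2 * ↑π * Complex.I * (n:ℂ) * z / (ξ₀:ℂ)) := by
      apply Differentiable.div_const
      exact differentiable_id.const_mul _
    exact (Complex.differentiable_exp.comp hlin).const_mul _
  have hQana : AnalyticOnNhd ℂ Q Set.univ := hQdiff.differentiableOn.analyticOnNhd isOpen_univ
  have hofReal : AnalyticOnNhd ℝ (fun x : ℝ => (x : ℂ)) Set.univ :=
    fun x _ => Complex.ofRealCLM.analyticAt x
  have hPana : AnalyticOnNhd ℝ (fun x : ℝ => Q (x : ℂ)) Set.univ :=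
    (hQana.restrictScalars).comp hofReal (Set.mapsTo_univ _ _)
  have hz₀ : (t + ξ₀ / 2) / 2 ∈ J := by
    show (t + ξ₀ / 2) / 2 ∈ Set.Ioo t (ξ₀ / 2)
    constructor <;> linarith
  have hev : (fun x : ℝ => Q (x : ℂ)) =ᶠ[nhds ((t + ξ₀ / 2) / 2)] 0 := by
    refine Filter.eventually_of_mem (isOpen_Ioo.mem_nhds hz₀) ?_
    intro x hx
    show Q (x : ℂ) = 0
    rw [← hQPr x]
    exact hPrJ x hx
  have hQzero : Set.EqOn (fun x : ℝ => Q (x : ℂ)) 0 Set.univ :=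
    hPana.eqOn_zero_of_preconnected_of_eventuallyEq_zero isPreconnected_univ
      (Set.mem_univ _) hev
  have hPzero : ∀ x : ℝ, PC ((x : ℝ) : AddCircle ξ₀) = 0 := by
    intro x
    rw [hQPr x]
    exact hQzero (Set.mem_univ x)
  -- Conclusion : u vanishes a.e., contradiction
  have hIocae : ∀ᵐ x ∂volume.restrict (Set.Ioc a (a + ξ₀)), u x = 0 := by
    filter_upwards [huP] with x hx
    rw [hx]
    exact hPzero x
  have hcomplae : ∀ᵐ x ∂volume.restrict (Set.Ioc a (a + ξ₀))ᶜ, u x = 0 := by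
    filter_upwards [ae_restrict_mem measurableSet_Ioc.compl] with x hx
    by_contra h0
    have hxI := hsupp (Function.mem_support.mpr h0)
    have hσnn : 0 ≤ σ / (2 * π) := by
      have := hxI.1.trans hxI.2
      linarith
    apply hx
    constructor
    · rw [ha]; linarith [hxI.1]
    · rw [haT]; linarith [hxI.2]
  exact hne (ae_of_ae_restrict_of_ae_restrict_compl _ hIocae hcomplae)
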